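/- Let a = (f_1,...,f_k), b = (g_1,...,g_l) ∈ K(X,G) with A_i = supp(f_i), B_j = supp(g_j). If there exists m ∈ ℕ⁺ such that [a] ≤ m[b] in W(X,G) and D([a]) < D([b]) for every state D on W(X,G) with D([b]) = 1, then ⋃_i A_i ⊆ G·(⋃_j B_j) and Σ_i μ(A_i) < Σ_j μ(B_j) for every μ ∈ Pr_G(X) with Σ_j μ(B_j) = 1. -/

import Mathlib

open scoped Pointwise NNReal ENNReal

variable {X : Type*} [TopologicalSpace X] {G : Type*} [Group G] [MulAction G X]

/-- The open support of a continuous `ℝ≥0`-valued function. -/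
def osupp (f : C(X, ℝ≥0)) : Set X := {x | f x ≠ 0}

/-- Dynamical subequivalence `A ≼ B` for two finite tuples (lists) of subsets of `X`. -/
def SetSubeq (G : Type*) [Group G] [MulAction G X] (A B : List (Set X)) : Prop :=
  ∀ F : Fin A.length → Set X,
    (∀ i, IsClosed (F i) ∧ F i ⊆ A.get i) →
    ∃ (J : Fin A.length → ℕ)
      (U : (i : Fin A.length) → Fin (J i) → Set X)
      (s : (i : Fin A.length) → Fin (J i) → G)
      (k : (i : Fin A.length) → Fin (J i) → Fin B.length),
      (∀ i j, IsOpen (U i j)) ∧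
      (∀ i, F i ⊆ ⋃ j, U i j) ∧
      (∀ i j, (s i j) • U i j ⊆ B.get (k i j)) ∧
      (∀ (p q : Σ i : Fin A.length, Fin (J i)), p ≠ q → k p.1 p.2 = k q.1 q.2 →
        Disjoint ((s p.1 p.2) • U p.1 p.2) ((s q.1 q.2) • U q.1 q.2))

/-- Dynamical subequivalence `a ≼ b` for tuples of nonnegative continuous functions. -/
def DynSubeq (G : Type*) [Group G] [MulAction G X] (a b : List C(X, ℝ≥0)) : Prop :=
  SetSubeq G (a.map osupp) (b.map osupp)

/-- The entrywise cut-down `(f - ε)₊`. -/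
noncomputable def cutFun (f : C(X, ℝ≥0)) (ε : ℝ≥0) : C(X, ℝ≥0) :=
  ⟨fun x => f x - ε, f.continuous.sub continuous_const⟩

noncomputable def cutList (a : List C(X, ℝ≥0)) (ε : ℝ≥0) : List C(X, ℝ≥0) := a.map (cutFun · ε)

/-- Membership in the algebra of sets generated by the open sets of `X`. -/
def InAlg (X : Type*) [TopologicalSpace X] (s : Set X) : Prop :=
  s ∈ MeasureTheory.generateSetAlgebra {t : Set X | IsOpen t}

/-- A `G`-invariant regular premeasure on the algebra generated by the open sets. -/
structure InvRegPremeasure (X : Type*) [TopologicalSpace X] (G : Type*) [Group G]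
    [MulAction G X] where
  m : Set X → ℝ≥0∞
  junk : ∀ s : Set X, ¬ InAlg X s → m s = 0
  empty' : m ∅ = 0
  countably_additive : ∀ A : ℕ → Set X, (∀ n, InAlg X (A n)) →
    Pairwise (Function.onFun Disjoint A) → InAlg X (⋃ n, A n) →
    m (⋃ n, A n) = ∑' n, m (A n)
  invariant : ∀ (g : G) (s : Set X), InAlg X s → m (g • s) = m s
  inner_regular : ∀ s : Set X, InAlg X s →
    m s = ⨆ (F : Set X) (_ : IsCompact F ∧ F ⊆ s), m F
  outer_regular : ∀ s : Set X, InAlg X s →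
    m s = ⨅ (O : Set X) (_ : IsOpen O ∧ s ⊆ O), m O

/-- A state on the generalized type semigroup `W(X, G)`, described at the level of
`K(X, G)`: a function on tuples which is monotone for `≼`, additive for concatenation,
and vanishes on the empty tuple. -/
structure DynState (X : Type*) [TopologicalSpace X] (G : Type*) [Group G]
    [MulAction G X] where
  toFun : List C(X, ℝ≥0) → ℝ≥0∞
  mono : ∀ a b, DynSubeq G a b → toFun a ≤ toFun b
  additive : ∀ a b, toFun (a ++ b) = toFun a + toFun b
  zero' : toFun [] = 0

/-- Lower semicontinuity of a state. -/
def DynState.LSC (D : DynState X G) : Prop :=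
  ∀ a, D.toFun a = ⨆ (ε : ℝ≥0) (_ : 0 < ε), D.toFun (cutList a ε)

section Helpers

open MeasureTheory Set

variable {X : Type*} [TopologicalSpace X] {G : Type*} [Group G] [MulAction G X]

lemma inAlg_of_isOpen {s : Set X} (hs : IsOpen s) : InAlg X s :=
  MeasureTheory.generateSetAlgebra.base s hs

lemma inAlg_isSetAlgebra : MeasureTheory.IsSetAlgebra {s : Set X | InAlg X s} :=
  MeasureTheory.isSetAlgebra_generateSetAlgebra

lemma inAlg_of_isClosed {s : Set X} (hs : IsClosed s) : InAlg X s := by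
  have h := MeasureTheory.generateSetAlgebra.compl _
    (inAlg_of_isOpen (X := X) hs.isOpen_compl)
  simp only [compl_compl] at h
  exact h

lemma osupp_isOpen (f : C(X, ℝ≥0)) : IsOpen (osupp f) := by
  have h : osupp f = f ⁻¹' ({0}ᶜ) := by ext x; simp [osupp]
  rw [h]
  exact isOpen_compl_singleton.preimage f.continuous

lemma smul_set_isOpen (hG : ∀ g : G, Continuous fun x : X => g • x) (g : G) {U : Set X}
    (hU : IsOpen U) : IsOpen (g • U) := by
  have h : g • U = (fun x : X => g⁻¹ • x) ⁻¹' U := by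
    ext x; simp [Set.mem_smul_set_iff_inv_smul_mem]
  rw [h]
  exact hU.preimage (hG g⁻¹)

variable (μ : InvRegPremeasure X G)

lemma mu_union_disjoint {S T : Set X} (hS : InAlg X S) (hT : InAlg X T)
    (hd : Disjoint S T) : μ.m (S ∪ T) = μ.m S + μ.m T := by
  classical
  set A : ℕ → Set X := fun n => if n = 0 then S else if n = 1 then T else ∅ with hA
  have hUnion : ⋃ n, A n = S ∪ T := by
    apply subset_antisymm
    · refine iUnion_subset fun n => ?_
      simp only [A]
      split_ifs <;> simp
    · refine union_subset ?_ ?_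
      · simpa [A] using subset_iUnion A 0
      · simpa [A] using subset_iUnion A 1
  have hmem : ∀ n, InAlg X (A n) := by
    intro n; simp only [A]; split_ifs
    exacts [hS, hT, inAlg_isSetAlgebra.empty_mem]
  have hpw : Pairwise (Function.onFun Disjoint A) := by
    intro n m hnm
    unfold Function.onFun
    rcases n with _ | _ | n <;> rcases m with _ | _ | m <;>
      simp_all [A, hd, hd.symm]
  have hkey := μ.countably_additive A hmem hpw (hUnion ▸ inAlg_isSetAlgebra.union_mem hS hT)
  rw [hUnion] at hkey
  rw [hkey, tsum_eq_sum (s := ({0, 1} : Finset ℕ)) ?_]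
  · rw [Finset.sum_pair (by norm_num)]
    simp [A]
  · intro n hn
    have h0 : n ≠ 0 := by rintro rfl; simp at hn
    have h1 : n ≠ 1 := by rintro rfl; simp at hn
    simp [A, h0, h1, μ.empty']

lemma mu_mono {S T : Set X} (hS : InAlg X S) (hT : InAlg X T) (hsub : S ⊆ T) :
    μ.m S ≤ μ.m T := by
  have hd : InAlg X (T \ S) := inAlg_isSetAlgebra.diff_mem hT hS
  have h := mu_union_disjoint μ hS hd disjoint_sdiff_self_right
  rw [Set.union_diff_cancel hsub] at h
  rw [h]; exact le_self_add

lemma mu_union_le {S T : Set X} (hS : InAlg X S) (hT : InAlg X T) :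
    μ.m (S ∪ T) ≤ μ.m S + μ.m T := by
  rw [← Set.union_diff_self,
    mu_union_disjoint μ hS (inAlg_isSetAlgebra.diff_mem hT hS) disjoint_sdiff_self_right]
  exact add_le_add le_rfl (mu_mono μ (inAlg_isSetAlgebra.diff_mem hT hS) hT diff_subset)

lemma inAlg_biUnion {ι : Type*} (t : Finset ι) (V : ι → Set X)
    (h : ∀ i ∈ t, InAlg X (V i)) : InAlg X (⋃ i ∈ t, V i) :=
  inAlg_isSetAlgebra.biUnion_mem t h

lemma mu_biUnion_le {ι : Type*} [DecidableEq ι] (t : Finset ι) (V : ι → Set X)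
    (h : ∀ i ∈ t, InAlg X (V i)) : μ.m (⋃ i ∈ t, V i) ≤ ∑ i ∈ t, μ.m (V i) := by
  induction t using Finset.induction with
  | empty => simp [μ.empty']
  | @insert a t ha IH =>
    rw [Finset.sum_insert ha, Finset.set_biUnion_insert]
    refine le_trans (mu_union_le μ (h a (Finset.mem_insert_self a t))
      (inAlg_biUnion t V fun i hi => h i (Finset.mem_insert_of_mem hi))) ?_
    exact add_le_add le_rfl (IH fun i hi => h i (Finset.mem_insert_of_mem hi))

lemma mu_biUnion_disjoint {ι : Type*} [DecidableEq ι] (t : Finset ι) (V : ι → Set X)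
    (h : ∀ i ∈ t, InAlg X (V i))
    (hd : ∀ i ∈ t, ∀ j ∈ t, i ≠ j → Disjoint (V i) (V j)) :
    μ.m (⋃ i ∈ t, V i) = ∑ i ∈ t, μ.m (V i) := by
  induction t using Finset.induction with
  | empty => simp [μ.empty']
  | @insert a t ha IH =>
    rw [Finset.sum_insert ha, Finset.set_biUnion_insert]
    rw [mu_union_disjoint μ (h a (Finset.mem_insert_self a t))
      (inAlg_biUnion t V fun i hi => h i (Finset.mem_insert_of_mem hi)) ?_,
      IH (fun i hi => h i (Finset.mem_insert_of_mem hi))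
        (fun i hi j hj hij => hd i (Finset.mem_insert_of_mem hi) j
          (Finset.mem_insert_of_mem hj) hij)]
    simp only [Set.disjoint_iUnion_right]
    intro i hi
    exact hd a (Finset.mem_insert_self a t) i (Finset.mem_insert_of_mem hi)
      (by rintro rfl; exact ha hi)

lemma mu_sum_disjoint_le {ι : Type*} [DecidableEq ι] (t : Finset ι) (V : ι → Set X)
    {W : Set X} (hW : InAlg X W) (h : ∀ i ∈ t, InAlg X (V i))
    (hsub : ∀ i ∈ t, V i ⊆ W)
    (hd : ∀ i ∈ t, ∀ j ∈ t, i ≠ j → Disjoint (V i) (V j)) :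
    ∑ i ∈ t, μ.m (V i) ≤ μ.m W := by
  rw [← mu_biUnion_disjoint μ t V h hd]
  exact mu_mono μ (inAlg_biUnion t V h) hW (Set.iUnion₂_subset hsub)

end Helpers
section Key

open MeasureTheory Set

variable {X : Type*} [TopologicalSpace X] {G : Type*} [Group G] [MulAction G X]

lemma list_fin_sum {α M : Type*} [AddCommMonoid M] (f : α → M) :
    ∀ c : List α, ∑ i : Fin c.length, f (c.get i) = (c.map f).sum
  | [] => by simp
  | x :: c => by
    rw [List.map_cons, List.sum_cons, ← list_fin_sum f c]
    exact Fin.sum_univ_succ _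

lemma key_lemma [T2Space X] (hG : ∀ g : G, Continuous fun x : X => g • x)
    (μ : InvRegPremeasure X G) (A B : List (Set X))
    (hA : ∀ i : Fin A.length, IsOpen (A.get i))
    (hB : ∀ j : Fin B.length, IsOpen (B.get j))
    (h : SetSubeq G A B) :
    ∑ i : Fin A.length, μ.m (A.get i) ≤ ∑ j : Fin B.length, μ.m (B.get j) := by
  classical
  have main : ∀ F : Fin A.length → Set X, (∀ i, IsCompact (F i) ∧ F i ⊆ A.get i) →
      ∑ i : Fin A.length, μ.m (F i) ≤ ∑ j : Fin B.length, μ.m (B.get j) := by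
    intro F hF
    obtain ⟨J, U, s, k, hUopen, hcover, hsub, hdisj⟩ :=
      h F fun i => ⟨(hF i).1.isClosed, (hF i).2⟩
    have hUInAlg : ∀ i j, InAlg X (U i j) := fun i j => inAlg_of_isOpen (hUopen i j)
    have hsUInAlg : ∀ i j, InAlg X (s i j • U i j) := fun i j =>
      inAlg_of_isOpen (smul_set_isOpen hG _ (hUopen i j))
    calc ∑ i : Fin A.length, μ.m (F i)
        ≤ ∑ i : Fin A.length, ∑ j : Fin (J i), μ.m (U i j) := by
          refine Finset.sum_le_sum fun i _ => ?_
          have h1 : μ.m (F i) ≤ μ.m (⋃ j ∈ (Finset.univ : Finset (Fin (J i))), U i j) := by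
            refine mu_mono μ (inAlg_of_isClosed (hF i).1.isClosed)
              (inAlg_biUnion _ _ fun j _ => hUInAlg i j) ?_
            simpa using hcover i
          exact le_trans h1 (mu_biUnion_le μ _ _ fun j _ => hUInAlg i j)
      _ = ∑ i : Fin A.length, ∑ j : Fin (J i), μ.m (s i j • U i j) := by
          refine Finset.sum_congr rfl fun i _ => Finset.sum_congr rfl fun j _ => ?_
          rw [μ.invariant (s i j) (U i j) (hUInAlg i j)]
      _ = ∑ p : Σ i : Fin A.length, Fin (J i), μ.m (s p.1 p.2 • U p.1 p.2) := by
          rw [← Finset.univ_sigma_univ, Finset.sum_sigma]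
      _ = ∑ κ : Fin B.length, ∑ p ∈ Finset.univ.filter
            (fun p : Σ i : Fin A.length, Fin (J i) => k p.1 p.2 = κ),
            μ.m (s p.1 p.2 • U p.1 p.2) := by
          rw [Finset.sum_fiberwise_eq_sum_filter]
          simp
      _ ≤ ∑ κ : Fin B.length, μ.m (B.get κ) := by
          refine Finset.sum_le_sum fun κ _ => ?_
          refine mu_sum_disjoint_le μ _ _ (inAlg_of_isOpen (hB κ))
            (fun p _ => hsUInAlg p.1 p.2) ?_ ?_
          · intro p hp
            rw [Finset.mem_filter] at hp
            rw [← hp.2]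
            exact hsub p.1 p.2
          · intro p hp q hq hpq
            rw [Finset.mem_filter] at hp hq
            exact hdisj p q hpq (hp.2.trans hq.2.symm)
  -- supremum representation via compact subsets
  let K := ∀ i : Fin A.length, {F : Set X // IsCompact F ∧ F ⊆ A.get i}
  have hKne : Nonempty K := ⟨fun i => ⟨∅, isCompact_empty, empty_subset _⟩⟩
  have hrep : ∀ i : Fin A.length, μ.m (A.get i) = ⨆ c : K, μ.m ((c i : Set X)) := by
    intro i
    apply le_antisymm
    · rw [μ.inner_regular _ (inAlg_of_isOpen (hA i))]
      refine iSup₂_le fun F hF => ?_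
      refine le_iSup_of_le
        (Function.update (fun i' => ⟨∅, isCompact_empty, empty_subset _⟩) i ⟨F, hF⟩) ?_
      rw [Function.update_self]
    · refine iSup_le fun c => ?_
      exact mu_mono μ (inAlg_of_isClosed (c i).2.1.isClosed) (inAlg_of_isOpen (hA i))
        (c i).2.2
  calc ∑ i : Fin A.length, μ.m (A.get i)
      = ∑ i : Fin A.length, ⨆ c : K, μ.m ((c i : Set X)) := by
        exact Finset.sum_congr rfl fun i _ => hrep i
    _ = ⨆ c : K, ∑ i : Fin A.length, μ.m ((c i : Set X)) := by
        refine ENNReal.finsetSum_iSup fun c d => ?_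
        refine ⟨fun i => ⟨(c i : Set X) ∪ (d i : Set X),
          (c i).2.1.union (d i).2.1, union_subset (c i).2.2 (d i).2.2⟩, fun i => ?_⟩
        constructor
        · exact mu_mono μ (inAlg_of_isClosed (c i).2.1.isClosed)
            (inAlg_of_isClosed ((c i).2.1.union (d i).2.1).isClosed) subset_union_left
        · exact mu_mono μ (inAlg_of_isClosed (d i).2.1.isClosed)
            (inAlg_of_isClosed ((c i).2.1.union (d i).2.1).isClosed) subset_union_right
    _ ≤ ∑ j : Fin B.length, μ.m (B.get j) := by
        refine iSup_le fun c => main (fun i => (c i : Set X)) fun i => (c i).2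

end Key
section Main

open MeasureTheory Set

variable {X : Type*} [TopologicalSpace X] {G : Type*} [Group G] [MulAction G X]

/-- The state induced by an invariant regular premeasure. -/
noncomputable def muState [T2Space X] (hG : ∀ g : G, Continuous fun x : X => g • x)
    (μ : InvRegPremeasure X G) : DynState X G where
  toFun c := ∑ i : Fin c.length, μ.m (osupp (c.get i))
  mono a b h := by
    have hA : ∀ i : Fin (a.map osupp).length, IsOpen ((a.map osupp).get i) := by
      intro i; simp only [List.get_eq_getElem, List.getElem_map]; exact osupp_isOpen _
    have hB : ∀ j : Fin (b.map osupp).length, IsOpen ((b.map osupp).get j) := by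
      intro j; simp only [List.get_eq_getElem, List.getElem_map]; exact osupp_isOpen _
    have hk := key_lemma hG μ (a.map osupp) (b.map osupp) hA hB h
    rw [list_fin_sum μ.m (a.map osupp), list_fin_sum μ.m (b.map osupp)] at hk
    rw [list_fin_sum (fun f => μ.m (osupp f)) a, list_fin_sum (fun f => μ.m (osupp f)) b]
    simp only [List.map_map] at hk
    exact hk
  additive a b := by
    rw [list_fin_sum (fun f => μ.m (osupp f)) (a ++ b),
      list_fin_sum (fun f => μ.m (osupp f)) a, list_fin_sum (fun f => μ.m (osupp f)) b,
      List.map_append, List.sum_append]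
  zero' := by simp

end Main

/-- **Lemma 3.8, (ii) ⇒ (iii).** If `[a] ≤ m[b]` in `W(X, G)` for some `m ∈ ℕ⁺` and
`D([a]) < D([b])` for every state `D` with `D([b]) = 1`, then
`⋃ᵢ Aᵢ ⊆ G ⋅ (⋃ⱼ Bⱼ)` and `Σᵢ μ(Aᵢ) < Σⱼ μ(Bⱼ)` for every `μ ∈ Pr_G(X)` with
`Σⱼ μ(Bⱼ) = 1`. -/
theorem state_comparison_implies_premeasure_comparison {X : Type*} [TopologicalSpace X]
    [CompactSpace X] [T2Space X] [TopologicalSpace.MetrizableSpace X]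
    {G : Type*} [Group G] [MulAction G X]
    (hG : ∀ g : G, Continuous fun x : X => g • x)
    (a b : List C(X, ℝ≥0))
    (h₁ : ∃ m : ℕ, 0 < m ∧ DynSubeq G a (List.flatten (List.replicate m b)))
    (h₂ : ∀ D : DynState X G, D.toFun b = 1 → D.toFun a < D.toFun b) :
    ((⋃ i : Fin a.length, osupp (a.get i)) ⊆
      ⋃ g : G, g • ⋃ j : Fin b.length, osupp (b.get j)) ∧
    (∀ μ : InvRegPremeasure X G, (∑ j : Fin b.length, μ.m (osupp (b.get j))) = 1 →
      (∑ i : Fin a.length, μ.m (osupp (a.get i))) <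
        ∑ j : Fin b.length, μ.m (osupp (b.get j))) := by
  classical
  constructor
  · obtain ⟨m, hm, hsub⟩ := h₁
    intro x hx
    rw [Set.mem_iUnion] at hx
    obtain ⟨i, hxi⟩ := hx
    have hmem : osupp (a.get i) ∈ a.map osupp :=
      List.mem_map_of_mem (f := osupp) (List.get_mem a i)
    obtain ⟨i', hi'⟩ := List.mem_iff_get.mp hmem
    set F : Fin (a.map osupp).length → Set X := fun i'' => if i'' = i' then {x} else ∅
      with hFdef
    have hFprop : ∀ i'', IsClosed (F i'') ∧ F i'' ⊆ (a.map osupp).get i'' := by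
      refine fun i'' => ⟨?_, ?_⟩
      · by_cases hc : i'' = i' <;> simp [F, hc, isClosed_singleton]
      · by_cases hc : i'' = i'
        · subst hc
          simp only [F, if_pos rfl]
          rw [Set.singleton_subset_iff, hi']
          exact hxi
        · simp [F, hc]
    obtain ⟨J, U, s, k, hUopen, hcover, hs, hdisj⟩ := hsub F hFprop
    have hxF : x ∈ F i' := by simp [F]
    have hxcov := hcover i' hxF
    rw [Set.mem_iUnion] at hxcov
    obtain ⟨j, hj⟩ := hxcov
    have h1 : s i' j • x ∈
        (((List.replicate m b).flatten.map osupp).get (k i' j)) :=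
      hs i' j (Set.smul_mem_smul_set hj)
    have h2 := List.get_mem ((List.replicate m b).flatten.map osupp) (k i' j)
    rw [List.mem_map] at h2
    obtain ⟨g₀, hg₀mem, hg₀⟩ := h2
    rw [List.mem_flatten] at hg₀mem
    obtain ⟨l, hl, hg₀l⟩ := hg₀mem
    rw [List.eq_of_mem_replicate hl] at hg₀l
    obtain ⟨j₀, hj₀⟩ := List.mem_iff_get.mp hg₀l
    rw [Set.mem_iUnion]
    refine ⟨(s i' j)⁻¹, ?_⟩
    rw [Set.mem_smul_set_iff_inv_smul_mem, inv_inv, Set.mem_iUnion]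
    refine ⟨j₀, ?_⟩
    rw [hj₀, hg₀]
    exact h1
  · intro μ hμ
    exact h₂ (muState hG μ) hμ
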